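/- Let p, k, q be positive integers with p − 2 ≥ k. The characteristic polynomial of the adjacency matrix of the generalized pineapple graph K_{p,k}^q equals x^{q−1} (x+1)^{p−2} [x³ − (p−2)x² − (p + kq − 1)x + kq(p − k − 1)]. -/

import Mathlib

open Polynomial

/-- Adjacency matrix of the generalized pineapple graph `K_{p,k}^q`:
vertices `0,…,p-1` form a clique `K_p`, vertices `p,…,p+q-1` are independent,
and each independent vertex is joined to the `k` clique vertices `0,…,k-1`. -/
def pineappleAdj (p k q : ℕ) : Matrix (Fin (p + q)) (Fin (p + q)) ℚ :=
  fun i j =>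
    if i = j then 0
    else if (i : ℕ) < p ∧ (j : ℕ) < p then 1
    else if (i : ℕ) < k ∨ (j : ℕ) < k then 1
    else 0

section Aux

variable {F : Type*} [Field F]

lemma pin_filter_lt (n m : ℕ) (h : m ≤ n) :
    (Finset.range n).filter (fun i => i < m) = Finset.range m := by
  ext i; simp [Finset.mem_filter]; omega

lemma pin_sum_if_lt (n m : ℕ) (h : m ≤ n) (c : F) :
    ∑ i : Fin n, (if (i : ℕ) < m then c else 0) = m * c := by
  rw [Fin.sum_univ_eq_sum_range (fun i => if i < m then c else 0) n,
    Finset.sum_ite, Finset.sum_const_zero, add_zero, Finset.sum_const,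
    pin_filter_lt n m h, Finset.card_range, nsmul_eq_mul]

lemma pin_sum_if_not_lt (p q : ℕ) (c : F) :
    ∑ i : Fin (p + q), (if (i : ℕ) < p then 0 else c) = q * c := by
  rw [Fin.sum_univ_eq_sum_range (fun i => if i < p then 0 else c) (p + q),
    Finset.sum_ite, Finset.sum_const_zero, zero_add, Finset.sum_const]
  have h2 : (Finset.range (p + q)).filter (fun i => ¬ i < p) = Finset.Ico p (p + q) := by
    ext i; simp [Finset.mem_filter, Finset.mem_Ico]; omega
  rw [h2, Nat.card_Ico, nsmul_eq_mul]
  congr 2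
  omega

lemma pin_prod_d (p q : ℕ) (a b : F) :
    ∏ i : Fin (p + q), (if (i : ℕ) < p then a else b) = a ^ p * b ^ q := by
  rw [Fin.prod_univ_eq_prod_range (fun i => if i < p then a else b) (p + q),
    Finset.prod_ite, Finset.prod_const, Finset.prod_const,
    pin_filter_lt (p + q) p (by omega), Finset.card_range]
  have h2 : (Finset.range (p + q)).filter (fun i => ¬ i < p) = Finset.Ico p (p + q) := by
    ext i; simp [Finset.mem_filter, Finset.mem_Ico]; omega
  rw [h2, Nat.card_Ico]
  congr 2
  omega

end Aux

noncomputable section PinDefs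

def pinD (p q : ℕ) : Fin (p + q) → RatFunc ℚ :=
  fun i => if (i : ℕ) < p then RatFunc.X + 1 else RatFunc.X

def pinU (p k q : ℕ) : Matrix (Fin (p + q)) (Fin 3) (RatFunc ℚ) :=
  fun i => ![if (i : ℕ) < p then 1 else 0,
             if (i : ℕ) < k then 1 else 0,
             if (i : ℕ) < p then 0 else 1]

def pinV (p k q : ℕ) : Matrix (Fin 3) (Fin (p + q)) (RatFunc ℚ) :=
  ![fun j => if (j : ℕ) < p then 1 else 0,
    fun j => if (j : ℕ) < p then 0 else 1,
    fun j => if (j : ℕ) < k then 1 else 0]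

end PinDefs

lemma pin_charmatrix_map (p k q : ℕ) (hk : 0 < k) (hkp : k ≤ p) :
    ((pineappleAdj p k q).charmatrix).map (algebraMap ℚ[X] (RatFunc ℚ)) =
      Matrix.diagonal (pinD p q) - pinU p k q * pinV p k q := by
  ext i j
  rw [Matrix.sub_apply, Matrix.mul_apply]
  simp only [Matrix.map_apply, Matrix.charmatrix_apply, Matrix.sub_apply,
    Matrix.diagonal_apply, Matrix.mul_apply, Fin.sum_univ_three, pineappleAdj,
    pinD, pinU, pinV, map_sub, apply_ite (algebraMap ℚ[X] (RatFunc ℚ)),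
    RatFunc.algebraMap_C, RatFunc.algebraMap_X, map_zero, map_one,
    Matrix.cons_val_zero, Matrix.cons_val_one, Matrix.head_cons,
    Matrix.cons_val_two, Matrix.tail_cons]
  by_cases hij : i = j
  · subst hij
    by_cases h1 : (i : ℕ) < p <;> by_cases h2 : (i : ℕ) < k <;>
      simp [h1, h2] <;> first | ring1 | (exfalso; omega)
  · have hij' : ¬ ((i : ℕ) = (j : ℕ)) := fun h => hij (Fin.ext h)
    by_cases h1 : (i : ℕ) < p <;> by_cases h2 : (j : ℕ) < p <;>
      by_cases h3 : (i : ℕ) < k <;> by_cases h4 : (j : ℕ) < k <;>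
      simp [hij, h1, h2, h3, h4] <;> first | ring1 | (exfalso; omega)

set_option maxHeartbeats 2000000 in
theorem charpoly_pineapple (p k q : ℕ) (hk : 0 < k) (hq : 0 < q)
    (hpk : k ≤ p - 2) (hp : 0 < p) :
    (pineappleAdj p k q).charpoly =
      X ^ (q - 1) * (X + 1) ^ (p - 2) *
        (X ^ 3 - C ((p : ℚ) - 2) * X ^ 2 - C ((p : ℚ) + k * q - 1) * X
          + C ((k : ℚ) * q * ((p : ℚ) - k - 1))) := by
  have hp3 : 3 ≤ p := by omega
  have hkp : k ≤ p := by omega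
  apply IsFractionRing.injective ℚ[X] (RatFunc ℚ)
  have hx0 : (RatFunc.X : RatFunc ℚ) ≠ 0 := RatFunc.X_ne_zero
  have hx1 : (RatFunc.X : RatFunc ℚ) + 1 ≠ 0 := by
    have h1 : (X + 1 : ℚ[X]) ≠ 0 := by
      simpa using Polynomial.X_add_C_ne_zero (1 : ℚ)
    have h2 := (map_ne_zero_iff (algebraMap ℚ[X] (RatFunc ℚ))
      (IsFractionRing.injective ℚ[X] (RatFunc ℚ))).mpr h1
    simpa [map_add, RatFunc.algebraMap_X, map_one] using h2
  have hd0 : ∀ i, pinD p q i ≠ 0 := by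
    intro i; simp only [pinD]; split_ifs <;> assumption
  have hLHS : algebraMap ℚ[X] (RatFunc ℚ) (pineappleAdj p k q).charpoly =
      (Matrix.diagonal (pinD p q) - pinU p k q * pinV p k q).det := by
    rw [show (pineappleAdj p k q).charpoly = (pineappleAdj p k q).charmatrix.det from rfl,
      RingHom.map_det]
    congr 1
    rw [RingHom.mapMatrix_apply]
    exact pin_charmatrix_map p k q hk hkp
  set Dinv : Matrix (Fin (p + q)) (Fin (p + q)) (RatFunc ℚ) :=
    Matrix.diagonal (fun i => (pinD p q i)⁻¹) with hDinv
  have hdd : Matrix.diagonal (pinD p q) * Dinv = 1 := by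
    rw [hDinv, Matrix.diagonal_mul_diagonal]
    have h3 : (fun i => pinD p q i * (pinD p q i)⁻¹) = fun _ => (1 : RatFunc ℚ) := by
      funext i; exact mul_inv_cancel₀ (hd0 i)
    rw [h3, Matrix.diagonal_one]
  have key : Matrix.diagonal (pinD p q) - pinU p k q * pinV p k q =
      Matrix.diagonal (pinD p q) * (1 + (-(Dinv * pinU p k q)) * pinV p k q) := by
    rw [mul_add, mul_one, Matrix.neg_mul, Matrix.mul_neg, ← Matrix.mul_assoc,
      ← Matrix.mul_assoc, hdd, Matrix.one_mul, ← sub_eq_add_neg]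
  have hdetD : (Matrix.diagonal (pinD p q)).det = (RatFunc.X + 1) ^ p * RatFunc.X ^ q := by
    rw [Matrix.det_diagonal]
    exact pin_prod_d p q (RatFunc.X + 1) RatFunc.X
  have hdet : (Matrix.diagonal (pinD p q) - pinU p k q * pinV p k q).det =
      ((RatFunc.X + 1) ^ p * RatFunc.X ^ q) *
        (1 - pinV p k q * (Dinv * pinU p k q)).det := by
    rw [key, Matrix.det_mul, hdetD, Matrix.det_one_add_mul_comm, Matrix.mul_neg,
      ← sub_eq_add_neg]
  -- entries of the 3×3 matrix
  set A : Matrix (Fin 3) (Fin 3) (RatFunc ℚ) :=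
    1 - pinV p k q * (Dinv * pinU p k q) with hA
  have hentry : ∀ a b : Fin 3,
      A a b = (1 : Matrix (Fin 3) (Fin 3) (RatFunc ℚ)) a b -
        ∑ j : Fin (p + q), pinV p k q a j * ((pinD p q j)⁻¹ * pinU p k q j b) := by
    intro a b
    rw [hA, Matrix.sub_apply, Matrix.mul_apply]
    congr 1
    exact Finset.sum_congr rfl fun j _ => by rw [hDinv, Matrix.diagonal_mul]
  have hs00 : ∑ j : Fin (p + q), pinV p k q 0 j * ((pinD p q j)⁻¹ * pinU p k q j 0)
      = (p : RatFunc ℚ) * (RatFunc.X + 1)⁻¹ := by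
    refine (Finset.sum_congr rfl fun j _ => ?_).trans (pin_sum_if_lt (p + q) p (by omega) _)
    simp only [pinV, pinU, pinD, Matrix.cons_val_zero]
    split_ifs <;> first | ring1 | (exfalso; omega)
  have hs01 : ∑ j : Fin (p + q), pinV p k q 0 j * ((pinD p q j)⁻¹ * pinU p k q j 1)
      = (k : RatFunc ℚ) * (RatFunc.X + 1)⁻¹ := by
    refine (Finset.sum_congr rfl fun j _ => ?_).trans (pin_sum_if_lt (p + q) k (by omega) _)
    simp only [pinV, pinU, pinD, Matrix.cons_val_zero, Matrix.cons_val_one, Matrix.head_cons]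
    split_ifs <;> first | ring1 | (exfalso; omega)
  have hs02 : ∑ j : Fin (p + q), pinV p k q 0 j * ((pinD p q j)⁻¹ * pinU p k q j 2)
      = 0 := by
    refine (Finset.sum_congr rfl fun j _ => ?_).trans Finset.sum_const_zero
    simp only [pinV, pinU, pinD, Matrix.cons_val_zero, Matrix.cons_val_two, Matrix.tail_cons,
      Matrix.head_cons]
    split_ifs <;> first | ring1 | (exfalso; omega)
  have hs10 : ∑ j : Fin (p + q), pinV p k q 1 j * ((pinD p q j)⁻¹ * pinU p k q j 0)
      = 0 := by
    refine (Finset.sum_congr rfl fun j _ => ?_).trans Finset.sum_const_zero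
    simp only [pinV, pinU, pinD, Matrix.cons_val_zero, Matrix.cons_val_one, Matrix.head_cons]
    split_ifs <;> first | ring1 | (exfalso; omega)
  have hs11 : ∑ j : Fin (p + q), pinV p k q 1 j * ((pinD p q j)⁻¹ * pinU p k q j 1)
      = 0 := by
    refine (Finset.sum_congr rfl fun j _ => ?_).trans Finset.sum_const_zero
    simp only [pinV, pinU, pinD, Matrix.cons_val_one, Matrix.head_cons, Matrix.cons_val_zero]
    split_ifs <;> first | ring1 | (exfalso; omega)
  have hs12 : ∑ j : Fin (p + q), pinV p k q 1 j * ((pinD p q j)⁻¹ * pinU p k q j 2)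
      = (q : RatFunc ℚ) * RatFunc.X⁻¹ := by
    refine (Finset.sum_congr rfl fun j _ => ?_).trans (pin_sum_if_not_lt p q _)
    simp only [pinV, pinU, pinD, Matrix.cons_val_one, Matrix.head_cons, Matrix.cons_val_two,
      Matrix.tail_cons, Matrix.cons_val_zero]
    split_ifs <;> first | ring1 | (exfalso; omega)
  have hs20 : ∑ j : Fin (p + q), pinV p k q 2 j * ((pinD p q j)⁻¹ * pinU p k q j 0)
      = (k : RatFunc ℚ) * (RatFunc.X + 1)⁻¹ := by
    refine (Finset.sum_congr rfl fun j _ => ?_).trans (pin_sum_if_lt (p + q) k (by omega) _)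
    simp only [pinV, pinU, pinD, Matrix.cons_val_zero, Matrix.cons_val_two, Matrix.tail_cons,
      Matrix.head_cons]
    split_ifs <;> first | ring1 | (exfalso; omega)
  have hs21 : ∑ j : Fin (p + q), pinV p k q 2 j * ((pinD p q j)⁻¹ * pinU p k q j 1)
      = (k : RatFunc ℚ) * (RatFunc.X + 1)⁻¹ := by
    refine (Finset.sum_congr rfl fun j _ => ?_).trans (pin_sum_if_lt (p + q) k (by omega) _)
    simp only [pinV, pinU, pinD, Matrix.cons_val_one, Matrix.head_cons, Matrix.cons_val_two,
      Matrix.tail_cons, Matrix.cons_val_zero]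
    split_ifs <;> first | ring1 | (exfalso; omega)
  have hs22 : ∑ j : Fin (p + q), pinV p k q 2 j * ((pinD p q j)⁻¹ * pinU p k q j 2)
      = 0 := by
    refine (Finset.sum_congr rfl fun j _ => ?_).trans Finset.sum_const_zero
    simp only [pinV, pinU, pinD, Matrix.cons_val_two, Matrix.tail_cons, Matrix.head_cons]
    split_ifs <;> first | ring1 | (exfalso; omega)
  have hA00 : A 0 0 = 1 - (p : RatFunc ℚ) * (RatFunc.X + 1)⁻¹ := by
    rw [hentry, Matrix.one_apply_eq, hs00]
  have hA01 : A 0 1 = -((k : RatFunc ℚ) * (RatFunc.X + 1)⁻¹) := by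
    rw [hentry, Matrix.one_apply_ne (by decide), hs01]; ring
  have hA02 : A 0 2 = 0 := by
    rw [hentry, Matrix.one_apply_ne (by decide), hs02]; ring
  have hA10 : A 1 0 = 0 := by
    rw [hentry, Matrix.one_apply_ne (by decide), hs10]; ring
  have hA11 : A 1 1 = 1 := by
    rw [hentry, Matrix.one_apply_eq, hs11]; ring
  have hA12 : A 1 2 = -((q : RatFunc ℚ) * RatFunc.X⁻¹) := by
    rw [hentry, Matrix.one_apply_ne (by decide), hs12]; ring
  have hA20 : A 2 0 = -((k : RatFunc ℚ) * (RatFunc.X + 1)⁻¹) := by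
    rw [hentry, Matrix.one_apply_ne (by decide), hs20]; ring
  have hA21 : A 2 1 = -((k : RatFunc ℚ) * (RatFunc.X + 1)⁻¹) := by
    rw [hentry, Matrix.one_apply_ne (by decide), hs21]; ring
  have hA22 : A 2 2 = 1 := by
    rw [hentry, Matrix.one_apply_eq, hs22]; ring
  have hsmall : (RatFunc.X + 1) ^ 2 * RatFunc.X * A.det =
      RatFunc.X ^ 3 - ((p : RatFunc ℚ) - 2) * RatFunc.X ^ 2
        - ((p : RatFunc ℚ) + (k : RatFunc ℚ) * (q : RatFunc ℚ) - 1) * RatFunc.X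
        + (k : RatFunc ℚ) * (q : RatFunc ℚ) * ((p : RatFunc ℚ) - (k : RatFunc ℚ) - 1) := by
    rw [Matrix.det_fin_three, hA00, hA01, hA02, hA10, hA11, hA12, hA20, hA21, hA22]
    have e1 : ((RatFunc.X : RatFunc ℚ) + 1) * (RatFunc.X + 1)⁻¹ = 1 := mul_inv_cancel₀ hx1
    have e2 : (RatFunc.X : RatFunc ℚ) * RatFunc.X⁻¹ = 1 := mul_inv_cancel₀ hx0
    linear_combination
      (-(p : RatFunc ℚ) * RatFunc.X * (RatFunc.X + 1)
        - (q : RatFunc ℚ) * k * (RatFunc.X + 1) * (RatFunc.X * RatFunc.X⁻¹)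
        + (q : RatFunc ℚ) * k * ((p : RatFunc ℚ) - k) *
          ((RatFunc.X + 1) * (RatFunc.X + 1)⁻¹ + 1) * (RatFunc.X * RatFunc.X⁻¹)) * e1
      + (-(q : RatFunc ℚ) * k * (RatFunc.X + 1) + (q : RatFunc ℚ) * k * ((p : RatFunc ℚ) - k)) * e2
  -- assemble
  rw [hLHS, hdet]
  have hpow : ((RatFunc.X + 1) ^ p * RatFunc.X ^ q : RatFunc ℚ) =
      RatFunc.X ^ (q - 1) * (RatFunc.X + 1) ^ (p - 2) * ((RatFunc.X + 1) ^ 2 * RatFunc.X) := by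
    rw [show p = p - 2 + 2 by omega, show q = q - 1 + 1 by omega]
    simp only [Nat.add_sub_cancel]
    ring
  rw [hpow, mul_assoc, hsmall]
  simp only [map_mul, map_pow, map_add, map_sub, map_one, RatFunc.algebraMap_C,
    RatFunc.algebraMap_X, map_natCast, map_ofNat]
  try push_cast
  try ring
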